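/- For odd n, the map ψ_j sending a to the 2×2 matrix diag(ω^{2j}, −ω^{−2j}) and b to the matrix [[0,1],[−1,0]], where ω = exp(πi/n), extends to a group homomorphism from V_{8n} to GL₂(ℂ) for each 0 ≤ j ≤ n−1. -/

import Mathlib

/-- Defining relations of the group
`V_{8n} = ⟨a, b : a^{2n} = b⁴ = 1, ba = a⁻¹b⁻¹, b⁻¹a = a⁻¹b⟩`,
as elements of the free group on two generators. -/
def V8nRels (n : ℕ) : Set (FreeGroup (Fin 2)) :=
  {FreeGroup.of 0 ^ (2 * n), FreeGroup.of 1 ^ 4,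
   FreeGroup.of 1 * FreeGroup.of 0 * FreeGroup.of 1 * FreeGroup.of 0,
   (FreeGroup.of 1)⁻¹ * FreeGroup.of 0 * (FreeGroup.of 1)⁻¹ * FreeGroup.of 0}

/-- The group `V_{8n}` as a presented group. -/
abbrev V8n (n : ℕ) := PresentedGroup (V8nRels n)

/-- The generator `a` of `V_{8n}`. -/
def va (n : ℕ) : V8n n := PresentedGroup.of 0

/-- The generator `b` of `V_{8n}`. -/
def vb (n : ℕ) : V8n n := PresentedGroup.of 1

open Matrix Complex in
private lemma diag_pow (a d : ℂ) (k : ℕ) :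
    (!![a, 0; 0, d]) ^ k = !![a ^ k, 0; 0, d ^ k] := by
  induction k with
  | zero => simp [Matrix.one_fin_two]
  | succ m ih => rw [pow_succ, ih, Matrix.mul_fin_two]; norm_num [pow_succ]

open Matrix Complex in
theorem stmt_7 (n : ℕ) (hn : Odd n) (j : ℕ) (hj : j ≤ n - 1) :
    ∃ ρ : V8n n →* GL (Fin 2) ℂ,
      (ρ (va n) : Matrix (Fin 2) (Fin 2) ℂ) =
        !![Complex.exp (Real.pi * Complex.I / n) ^ (2 * j), 0;
           0, -(Complex.exp (Real.pi * Complex.I / n) ^ (2 * j))⁻¹] ∧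
      (ρ (vb n) : Matrix (Fin 2) (Fin 2) ℂ) = !![0, 1; -1, 0] := by
  have hn0 : (n : ℂ) ≠ 0 := by
    exact_mod_cast Nat.pos_of_ne_zero (by rintro rfl; simp at hn) |>.ne'
  set x : ℂ := Complex.exp (Real.pi * Complex.I / n) ^ (2 * j) with hxdef
  have hx : x ≠ 0 := pow_ne_zero _ (Complex.exp_ne_zero _)
  have hx2n : x ^ (2 * n) = 1 := by
    rw [hxdef, ← pow_mul, mul_comm (2 * j), pow_mul, ← Complex.exp_nat_mul]
    have : (n : ℂ) * 2 * (Real.pi * Complex.I / n) = 2 * Real.pi * Complex.I := by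
      field_simp
    rw [show ((2 * n : ℕ) : ℂ) = (n : ℂ) * 2 by push_cast; ring, this,
      Complex.exp_two_pi_mul_I, one_pow]
  have hA : x * x⁻¹ = 1 := mul_inv_cancel₀ hx
  have hA' : x⁻¹ * x = 1 := inv_mul_cancel₀ hx
  refine ⟨PresentedGroup.toGroup (f := ![⟨!![x, 0; 0, -x⁻¹], !![x⁻¹, 0; 0, -x],
      by rw [Matrix.mul_fin_two]; norm_num [hA, hA', Matrix.one_fin_two.symm],
      by rw [Matrix.mul_fin_two]; norm_num [hA, hA', Matrix.one_fin_two.symm]⟩,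
    ⟨!![0, 1; -1, 0], !![0, -1; 1, 0],
      by rw [Matrix.mul_fin_two]; norm_num [Matrix.one_fin_two.symm],
      by rw [Matrix.mul_fin_two]; norm_num [Matrix.one_fin_two.symm]⟩]) ?_, ?_, ?_⟩
  · intro r hr
    rcases hr with h | h | h | h <;> subst h
    · rw [map_pow]
      apply Units.ext
      rw [Units.val_pow_eq_pow_val, Units.val_one]
      simp only [FreeGroup.lift_apply_of, Matrix.cons_val_zero]
      rw [diag_pow, hx2n]
      have h2 : x⁻¹ ^ (2 * n) = 1 := by rw [inv_pow, hx2n, inv_one]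
      have : (-x⁻¹) ^ (2 * n) = 1 := by
        rw [neg_pow, h2, mul_one, Even.neg_one_pow ⟨n, by ring⟩]
      rw [this, Matrix.one_fin_two]
    · rw [map_pow]
      apply Units.ext
      rw [Units.val_pow_eq_pow_val, Units.val_one]
      simp only [FreeGroup.lift_apply_of, Matrix.cons_val_one, Matrix.head_cons]
      show (!![0, 1; -1, 0] : Matrix (Fin 2) (Fin 2) ℂ) ^ 4 = 1
      norm_num [pow_succ, Matrix.mul_fin_two, Matrix.one_fin_two.symm]
    · apply Units.ext
      simp only [_root_.map_mul, FreeGroup.lift_apply_of, Units.val_mul, Units.val_one,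
        Matrix.cons_val_zero, Matrix.cons_val_one, Matrix.head_cons]
      show (!![0, 1; -1, 0] : Matrix (Fin 2) (Fin 2) ℂ) * !![x, 0; 0, -x⁻¹] *
        !![0, 1; -1, 0] * !![x, 0; 0, -x⁻¹] = 1
      rw [Matrix.mul_fin_two, Matrix.mul_fin_two, Matrix.mul_fin_two]
      norm_num [hA, hA', Matrix.one_fin_two.symm]
    · apply Units.ext
      simp only [_root_.map_mul, map_inv, FreeGroup.lift_apply_of, Units.val_mul, Units.val_one,
        Matrix.cons_val_zero, Matrix.cons_val_one, Matrix.head_cons]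
      show (!![0, -1; 1, 0] : Matrix (Fin 2) (Fin 2) ℂ) * !![x, 0; 0, -x⁻¹] *
        !![0, -1; 1, 0] * !![x, 0; 0, -x⁻¹] = 1
      rw [Matrix.mul_fin_two, Matrix.mul_fin_two, Matrix.mul_fin_two]
      norm_num [hA, hA', Matrix.one_fin_two.symm]
  · rw [va, PresentedGroup.toGroup.of]
    rfl
  · rw [vb, PresentedGroup.toGroup.of]
    rfl
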